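/- arXiv:1411.0171 — 5 statements merged into one kernel-verified Lean document; each statement's English description precedes it below -/
import Mathlib

section
/- If f : ℂ → E is admissible and has boundary Lipschitz constants (M_0, M_1), then for every positive integer n, every j ∈ {0,1} and every t ∈ ℝ one has ‖f_n(j + it)‖_E ≤ e^{1/n} M_j. -/
open Complex

/-- If `f : ℂ → E` is admissible and has boundary Lipschitz constants
`(M₀, M₁)`, i.e. `‖f(j+it) − f(j+is)‖ ≤ M_j |t−s|` for all real `s, t` and `j = 0, 1`,
then for every positive integer `n`, every `j ∈ {0,1}` and every `t ∈ ℝ`,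
`‖f_n(j + it)‖ ≤ e^{1/n} M_j`, where `f_n(z) = i n e^{z²/n} (f(z − i/n) − f(z))`. -/
theorem fn_boundary_bound
    {E : Type*} [NormedAddCommGroup E] [NormedSpace ℂ E] [CompleteSpace E]
    (f : ℂ → E)
    (hBdd : ∃ C : ℝ, ∀ z ∈ {z : ℂ | 0 ≤ z.re ∧ z.re ≤ 1}, ‖f z‖ ≤ C)
    (hCont : ContinuousOn f {z : ℂ | 0 ≤ z.re ∧ z.re ≤ 1})
    (hAnal : DifferentiableOn ℂ f {z : ℂ | 0 < z.re ∧ z.re < 1})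
    (M₀ M₁ : ℝ) (hM₀ : 0 ≤ M₀) (hM₁ : 0 ≤ M₁)
    (hL₀ : ∀ s t : ℝ, ‖f (t * Complex.I) - f (s * Complex.I)‖ ≤ M₀ * |t - s|)
    (hL₁ : ∀ s t : ℝ,
      ‖f (1 + t * Complex.I) - f (1 + s * Complex.I)‖ ≤ M₁ * |t - s|)
    (n : ℕ) (hn : 0 < n) (t : ℝ) :
    ‖(Complex.I * n * Complex.exp ((t * Complex.I) ^ 2 / n)) •
        (f (t * Complex.I - Complex.I / n) - f (t * Complex.I))‖ ≤
      Real.exp (1 / n) * M₀ ∧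
    ‖(Complex.I * n * Complex.exp ((1 + t * Complex.I) ^ 2 / n)) •
        (f (1 + t * Complex.I - Complex.I / n) - f (1 + t * Complex.I))‖ ≤
      Real.exp (1 / n) * M₁ := by

  have hn' : (0:ℝ) < n := by exact_mod_cast hn
  have habs : ∀ z : ℂ, ‖Complex.I * n * Complex.exp (z ^ 2 / n)‖
      = n * Real.exp ((z ^ 2).re / n) := by
    intro z
    rw [norm_mul, norm_mul, Complex.norm_I, Complex.norm_natCast, Complex.norm_exp, one_mul]
    congr 1
    rw [div_re]
    simp [Complex.normSq_natCast]
    field_simp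
  constructor
  · have h1 : (↑t * Complex.I - Complex.I / n) = (((t - 1/n : ℝ)) * Complex.I) := by
      push_cast; ring
    rw [h1, norm_smul, habs]
    have hre : (((t:ℂ) * Complex.I) ^ 2).re = -t ^ 2 := by
      simp [pow_two, Complex.mul_re, Complex.mul_im]
    rw [hre]
    have hb := hL₀ t (t - 1/n)
    have habs' : |(t - 1/n) - t| = 1/n := by
      rw [show (t - 1/n) - t = -(1/n) by ring, abs_neg, abs_of_pos (by positivity)]
    rw [habs'] at hb
    calc (n : ℝ) * Real.exp (-t ^ 2 / n) * ‖f (↑(t - 1/n) * Complex.I) - f (↑t * Complex.I)‖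
        ≤ n * Real.exp (1 / n) * (M₀ * (1/n)) := by
          apply mul_le_mul _ hb (norm_nonneg _) (by positivity)
          apply mul_le_mul_of_nonneg_left _ (le_of_lt hn')
          exact Real.exp_le_exp.mpr (by gcongr <;> nlinarith [sq_nonneg t])
      _ = Real.exp (1/n) * M₀ := by field_simp
  · have h1 : ((1:ℂ) + ↑t * Complex.I - Complex.I / n) = (1 + ((t - 1/n : ℝ)) * Complex.I) := by
      push_cast; ring
    rw [h1, norm_smul, habs]
    have hre : (((1:ℂ) + (t:ℂ) * Complex.I) ^ 2).re = 1 - t ^ 2 := by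
      simp [pow_two, Complex.add_re, Complex.add_im, Complex.mul_re, Complex.mul_im]
    rw [hre]
    have hb := hL₁ t (t - 1/n)
    have habs' : |(t - 1/n) - t| = 1/n := by
      rw [show (t - 1/n) - t = -(1/n) by ring, abs_neg, abs_of_pos (by positivity)]
    rw [habs'] at hb
    calc (n : ℝ) * Real.exp ((1 - t ^ 2) / n) * ‖f (1 + ↑(t - 1/n) * Complex.I) - f (1 + ↑t * Complex.I)‖
        ≤ n * Real.exp (1 / n) * (M₁ * (1/n)) := by
          apply mul_le_mul _ hb (norm_nonneg _) (by positivity)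
          apply mul_le_mul_of_nonneg_left _ (le_of_lt hn')
          exact Real.exp_le_exp.mpr (by gcongr <;> nlinarith [sq_nonneg t])
      _ = Real.exp (1/n) * M₁ := by field_simp
end

section
/- If f : ℂ → E is admissible and has boundary Lipschitz constants (M_0, M_1), then for every positive integer n and every z ∈ S one has ‖f_n(z)‖_E ≤ e^{1/n} max(M_0, M_1). -/
open Complex

/-- If `f : ℂ → E` is admissible and has boundary Lipschitz constants
`(M₀, M₁)`, then for every positive integer `n` and every `z` in the closed strip `S`,
`‖f_n(z)‖ ≤ e^{1/n} max(M₀, M₁)`, where `f_n(z) = i n e^{z²/n} (f(z − i/n) − f(z))`. -/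
theorem fn_strip_max_bound
    {E : Type*} [NormedAddCommGroup E] [NormedSpace ℂ E] [CompleteSpace E]
    (f : ℂ → E)
    (hBdd : ∃ C : ℝ, ∀ z ∈ {z : ℂ | 0 ≤ z.re ∧ z.re ≤ 1}, ‖f z‖ ≤ C)
    (hCont : ContinuousOn f {z : ℂ | 0 ≤ z.re ∧ z.re ≤ 1})
    (hAnal : DifferentiableOn ℂ f {z : ℂ | 0 < z.re ∧ z.re < 1})
    (M₀ M₁ : ℝ) (hM₀ : 0 ≤ M₀) (hM₁ : 0 ≤ M₁)
    (hL₀ : ∀ s t : ℝ, ‖f (t * Complex.I) - f (s * Complex.I)‖ ≤ M₀ * |t - s|)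
    (hL₁ : ∀ s t : ℝ,
      ‖f (1 + t * Complex.I) - f (1 + s * Complex.I)‖ ≤ M₁ * |t - s|)
    (n : ℕ) (hn : 0 < n) (z : ℂ) (hz : 0 ≤ z.re ∧ z.re ≤ 1) :
    ‖(Complex.I * n * Complex.exp (z ^ 2 / n)) •
        (f (z - Complex.I / n) - f z)‖ ≤ Real.exp (1 / n) * max M₀ M₁ := by
  obtain ⟨C, hC⟩ := hBdd
  have hnR : (0 : ℝ) < (n : ℝ) := by exact_mod_cast hn
  set g : ℂ → E := fun w => (Complex.I * n * Complex.exp (w ^ 2 / n)) •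
      (f (w - Complex.I / n) - f w) with hg
  have hset : {w : ℂ | 0 ≤ w.re ∧ w.re ≤ 1} = re ⁻¹' Set.Icc 0 1 := by
    ext w; simp [Set.mem_Icc]
  have hset' : {w : ℂ | 0 < w.re ∧ w.re < 1} = re ⁻¹' Set.Ioo 0 1 := by
    ext w; simp [Set.mem_Ioo]
  -- real part of z - I/n equals re z
  have hre_shift : ∀ w : ℂ, (w - Complex.I / n).re = w.re := by
    intro w
    simp [Complex.div_re]
  -- norm of the scalar factor
  have hnorm : ∀ w : ℂ, ‖g w‖ =
      (n : ℝ) * Real.exp ((w.re ^ 2 - w.im ^ 2) / n) * ‖f (w - Complex.I / n) - f w‖ := by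
    intro w
    have : (w ^ 2 / (n:ℂ)).re = (w.re ^ 2 - w.im ^ 2) / n := by
      rw [show ((n:ℂ)) = ((n:ℝ):ℂ) from by norm_cast, Complex.div_ofReal_re]
      simp only [sq, Complex.mul_re]
    rw [hg]
    simp only [norm_smul, norm_mul, Complex.norm_I, Complex.norm_natCast,
      Complex.norm_exp, one_mul, this]
  -- bound on the left boundary
  have hbound0 : ∀ w : ℂ, w.re = 0 → ‖g w‖ ≤ Real.exp (1 / n) * max M₀ M₁ := by
    intro w hw
    rw [hnorm]
    have hw1 : w - Complex.I / n = ((w.im - 1 / n : ℝ)) * Complex.I := by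
      apply Complex.ext <;> simp [hw, Complex.div_re, Complex.div_im]
    have hw2 : w = (w.im : ℝ) * Complex.I := by
      apply Complex.ext <;> simp [hw]
    have h1 : ‖f (w - Complex.I / n) - f w‖ ≤ M₀ * (1 / n) := by
      rw [hw1]; nth_rewrite 2 [hw2]
      have := hL₀ w.im (w.im - 1 / n)
      calc ‖f (((w.im - 1/n : ℝ)) * Complex.I) - f ((w.im : ℝ) * Complex.I)‖
          ≤ M₀ * |w.im - 1/n - w.im| := this
        _ = M₀ * (1 / n) := by
            rw [show w.im - 1/n - w.im = -(1/(n:ℝ)) by ring, abs_neg,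
              abs_of_pos (by positivity)]
    have h2 : Real.exp ((w.re ^ 2 - w.im ^ 2) / n) ≤ 1 := by
      rw [hw]
      apply Real.exp_le_one_iff.2
      apply div_nonpos_of_nonpos_of_nonneg _ hnR.le
      nlinarith [sq_nonneg w.im]
    calc (n : ℝ) * Real.exp ((w.re ^ 2 - w.im ^ 2) / n) * ‖f (w - Complex.I / n) - f w‖
        ≤ (n : ℝ) * 1 * (M₀ * (1 / n)) := by
          apply mul_le_mul _ h1 (norm_nonneg _) (by positivity)
          exact mul_le_mul_of_nonneg_left h2 hnR.le
      _ = M₀ := by field_simp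
      _ ≤ Real.exp (1 / n) * max M₀ M₁ := by
          calc M₀ ≤ max M₀ M₁ := le_max_left _ _
            _ = 1 * max M₀ M₁ := (one_mul _).symm
            _ ≤ Real.exp (1 / n) * max M₀ M₁ := by
                apply mul_le_mul_of_nonneg_right _ (le_max_iff.2 (Or.inl hM₀))
                exact Real.one_le_exp (by positivity)
  -- bound on the right boundary
  have hbound1 : ∀ w : ℂ, w.re = 1 → ‖g w‖ ≤ Real.exp (1 / n) * max M₀ M₁ := by
    intro w hw
    rw [hnorm]
    have hw1 : w - Complex.I / n = 1 + ((w.im - 1 / n : ℝ)) * Complex.I := by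
      apply Complex.ext <;> simp [hw, Complex.div_re, Complex.div_im]
    have hw2 : w = 1 + (w.im : ℝ) * Complex.I := by
      apply Complex.ext <;> simp [hw]
    have h1 : ‖f (w - Complex.I / n) - f w‖ ≤ M₁ * (1 / n) := by
      rw [hw1]; nth_rewrite 2 [hw2]
      have := hL₁ w.im (w.im - 1 / n)
      calc ‖f (1 + ((w.im - 1/n : ℝ)) * Complex.I) - f (1 + (w.im : ℝ) * Complex.I)‖
          ≤ M₁ * |w.im - 1/n - w.im| := this
        _ = M₁ * (1 / n) := by
            rw [show w.im - 1/n - w.im = -(1/(n:ℝ)) by ring, abs_neg,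
              abs_of_pos (by positivity)]
    have h2 : Real.exp ((w.re ^ 2 - w.im ^ 2) / n) ≤ Real.exp (1 / n) := by
      apply Real.exp_le_exp.2
      rw [hw]
      gcongr
      nlinarith [sq_nonneg w.im]
    calc (n : ℝ) * Real.exp ((w.re ^ 2 - w.im ^ 2) / n) * ‖f (w - Complex.I / n) - f w‖
        ≤ (n : ℝ) * Real.exp (1 / n) * (M₁ * (1 / n)) := by
          apply mul_le_mul _ h1 (norm_nonneg _) (by positivity)
          exact mul_le_mul_of_nonneg_left h2 hnR.le
      _ = Real.exp (1 / n) * M₁ := by field_simp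
      _ ≤ Real.exp (1 / n) * max M₀ M₁ := by
          apply mul_le_mul_of_nonneg_left (le_max_right _ _) (Real.exp_nonneg _)
  -- continuity and differentiability of g
  have hmaps : Set.MapsTo (fun w : ℂ => w - Complex.I / n)
      {w : ℂ | 0 ≤ w.re ∧ w.re ≤ 1} {w : ℂ | 0 ≤ w.re ∧ w.re ≤ 1} := by
    intro w hw
    simp only [Set.mem_setOf_eq, hre_shift] at *
    exact hw
  have hmaps' : Set.MapsTo (fun w : ℂ => w - Complex.I / n)
      {w : ℂ | 0 < w.re ∧ w.re < 1} {w : ℂ | 0 < w.re ∧ w.re < 1} := by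
    intro w hw
    simp only [Set.mem_setOf_eq, hre_shift] at *
    exact hw
  have hgcont : ContinuousOn g {w : ℂ | 0 ≤ w.re ∧ w.re ≤ 1} := by
    apply ContinuousOn.smul
    · apply Continuous.continuousOn
      continuity
    · exact ((hCont.comp (by fun_prop) hmaps).sub hCont)
  have hgdiff : DifferentiableOn ℂ g {w : ℂ | 0 < w.re ∧ w.re < 1} := by
    apply DifferentiableOn.smul
    · apply Differentiable.differentiableOn
      apply Differentiable.mul (by fun_prop)
      exact (Complex.differentiable_exp.comp (by fun_prop))
    · exact ((hAnal.comp (by fun_prop) hmaps').sub hAnal)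
  -- g is bounded on the strip
  have hgbdd : ∀ w ∈ re ⁻¹' Set.Ioo (0:ℝ) 1, ‖g w‖ ≤ (n : ℝ) * Real.exp (1 / n) * (C + C) := by
    intro w hw
    simp only [Set.mem_preimage, Set.mem_Ioo] at hw
    rw [hnorm]
    have hwS : w ∈ {w : ℂ | 0 ≤ w.re ∧ w.re ≤ 1} := ⟨hw.1.le, hw.2.le⟩
    have h1 : ‖f (w - Complex.I / n) - f w‖ ≤ C + C :=
      (norm_sub_le _ _).trans (add_le_add (hC _ (hmaps hwS)) (hC _ hwS))
    have h2 : Real.exp ((w.re ^ 2 - w.im ^ 2) / n) ≤ Real.exp (1 / n) := by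
      apply Real.exp_le_exp.2
      gcongr
      nlinarith [sq_nonneg w.im, hw.1.le, hw.2.le]
    exact mul_le_mul (mul_le_mul_of_nonneg_left h2 hnR.le) h1 (norm_nonneg _) (by positivity)
  -- apply Phragmén–Lindelöf
  have := PhragmenLindelof.vertical_strip (a := 0) (b := 1)
    (f := g) (C := Real.exp (1 / n) * max M₀ M₁) (z := z)
    (by
      constructor
      · rw [← hset']; exact hgdiff
      · apply hgcont.mono
        rw [hset]
        exact closure_minimal (Set.preimage_mono Set.Ioo_subset_Icc_self)
          (isClosed_Icc.preimage Complex.continuous_re))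
    (by
      refine ⟨0, by positivity, max 0 (Real.log ((n : ℝ) * Real.exp (1 / n) * (C + C))), ?_⟩
      rw [Asymptotics.isBigO_iff]
      refine ⟨1, ?_⟩
      filter_upwards [Filter.inter_mem_inf Filter.univ_mem (Filter.mem_principal_self _)]
        with w hw
      simp only [Set.mem_inter_iff, Set.mem_univ, true_and] at hw
      have h1 := hgbdd w hw
      have h2 : (n : ℝ) * Real.exp (1 / n) * (C + C) ≤
          Real.exp (max 0 (Real.log ((n : ℝ) * Real.exp (1 / n) * (C + C)))) := by
        rcases le_or_gt ((n : ℝ) * Real.exp (1 / n) * (C + C)) 0 with h | h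
        · exact h.trans (by positivity)
        · exact (Real.exp_log h).symm.le.trans (Real.exp_le_exp.2 (le_max_right _ _))
      have h3 : (1:ℝ) * ‖Real.exp (max 0 (Real.log ((n : ℝ) * Real.exp (1 / n) * (C + C))) *
          Real.exp (0 * |w.im|))‖ =
          Real.exp (max 0 (Real.log ((n : ℝ) * Real.exp (1 / n) * (C + C)))) := by
        simp [Real.norm_eq_abs, _root_.abs_of_nonneg (Real.exp_nonneg _)]
      rw [h3]
      exact h1.trans h2)
    hbound0 hbound1 hz.1 hz.2
  exact this
end

section
/- If f : ℂ → E is admissible and has boundary Lipschitz constants (M_0, M_1) with M_0 > 0 and M_1 > 0, then for every positive integer n and every z ∈ S one has ‖f_n(z)‖_E ≤ e^{1/n} M_0^{1 − Re z} M_1^{Re z}. -/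
open Complex Set

section Aux

variable {E : Type*} [NormedAddCommGroup E] [NormedSpace ℂ E]

private lemma re_sub_I_div (n : ℕ) (w : ℂ) : (w - Complex.I / n).re = w.re := by
  simp [Complex.div_re]

private lemma abs_coeff (n : ℕ) (w : ℂ) :
    ‖Complex.I * n * Complex.exp (w ^ 2 / n)‖ =
      (n : ℝ) * Real.exp ((w.re ^ 2 - w.im ^ 2) / n) := by
  rw [norm_mul, norm_mul, Complex.norm_I, Complex.norm_natCast, Complex.norm_exp, one_mul]
  congr 2
  have : (n : ℂ) = ((n : ℝ) : ℂ) := by push_cast; ring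
  rw [this, Complex.div_ofReal_re]
  congr 1
  rw [sq, Complex.mul_re]
  ring

end Aux

/-- If `f : ℂ → E` is admissible and has boundary Lipschitz constants
`(M₀, M₁)` with `M₀ > 0` and `M₁ > 0`, then for every positive integer `n` and every
`z` in the closed strip `S`, `‖f_n(z)‖ ≤ e^{1/n} M₀^{1 − Re z} M₁^{Re z}`, where
`f_n(z) = i n e^{z²/n} (f(z − i/n) − f(z))`. -/
theorem fn_strip_interpolated_bound
    {E : Type*} [NormedAddCommGroup E] [NormedSpace ℂ E] [CompleteSpace E]
    (f : ℂ → E)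
    (hBdd : ∃ C : ℝ, ∀ z ∈ {z : ℂ | 0 ≤ z.re ∧ z.re ≤ 1}, ‖f z‖ ≤ C)
    (hCont : ContinuousOn f {z : ℂ | 0 ≤ z.re ∧ z.re ≤ 1})
    (hAnal : DifferentiableOn ℂ f {z : ℂ | 0 < z.re ∧ z.re < 1})
    (M₀ M₁ : ℝ) (hM₀ : 0 < M₀) (hM₁ : 0 < M₁)
    (hL₀ : ∀ s t : ℝ, ‖f (t * Complex.I) - f (s * Complex.I)‖ ≤ M₀ * |t - s|)
    (hL₁ : ∀ s t : ℝ,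
      ‖f (1 + t * Complex.I) - f (1 + s * Complex.I)‖ ≤ M₁ * |t - s|)
    (n : ℕ) (hn : 0 < n) (z : ℂ) (hz : 0 ≤ z.re ∧ z.re ≤ 1) :
    ‖(Complex.I * n * Complex.exp (z ^ 2 / n)) •
        (f (z - Complex.I / n) - f z)‖ ≤
      Real.exp (1 / n) * M₀ ^ (1 - z.re) * M₁ ^ z.re := by
  obtain ⟨C, hC⟩ := hBdd
  have hnR : (0:ℝ) < n := Nat.cast_pos.mpr hn
  set g : ℂ → E := fun w =>
    (Complex.I * n * Complex.exp (w ^ 2 / n)) • (f (w - Complex.I / n) - f w) with hgdef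
  -- set equalities
  have hSclosed : {z : ℂ | 0 ≤ z.re ∧ z.re ≤ 1}
      = Complex.HadamardThreeLines.verticalClosedStrip 0 1 := by
    ext w; simp [Complex.HadamardThreeLines.verticalClosedStrip]
  have hSopen : {z : ℂ | 0 < z.re ∧ z.re < 1}
      = Complex.HadamardThreeLines.verticalStrip 0 1 := by
    ext w; simp [Complex.HadamardThreeLines.verticalStrip]
  have hclosure : closure (Complex.HadamardThreeLines.verticalStrip 0 1)
      ⊆ Complex.HadamardThreeLines.verticalClosedStrip 0 1 := by
    rw [Complex.HadamardThreeLines.verticalStrip,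
      Complex.HadamardThreeLines.verticalClosedStrip, ← closure_Ioo zero_ne_one,
      ← Complex.closure_preimage_re]
  -- the shifted function
  have hshift_maps_open : MapsTo (fun w => w - Complex.I / n)
      (Complex.HadamardThreeLines.verticalStrip 0 1) {z : ℂ | 0 < z.re ∧ z.re < 1} := by
    intro w hw
    have := re_sub_I_div n w
    simp only [Complex.HadamardThreeLines.verticalStrip, mem_preimage, mem_Ioo] at hw
    exact ⟨by rw [this]; exact hw.1, by rw [this]; exact hw.2⟩
  have hshift_maps_closed : MapsTo (fun w => w - Complex.I / n)
      (Complex.HadamardThreeLines.verticalClosedStrip 0 1) {z : ℂ | 0 ≤ z.re ∧ z.re ≤ 1} := by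
    intro w hw
    have := re_sub_I_div n w
    simp only [Complex.HadamardThreeLines.verticalClosedStrip, mem_preimage, mem_Icc] at hw
    exact ⟨by rw [this]; exact hw.1, by rw [this]; exact hw.2⟩
  have hcoeff_diff : Differentiable ℂ fun w : ℂ => Complex.I * n * Complex.exp (w ^ 2 / n) :=
    Differentiable.const_mul ((differentiable_pow 2).div_const _).cexp _
  have hsub_diff : Differentiable ℂ fun w : ℂ => w - Complex.I / n :=
    differentiable_id.sub_const _
  -- DiffContOnCl of g
  have hd : DiffContOnCl ℂ g (Complex.HadamardThreeLines.verticalStrip 0 1) := by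
    constructor
    · apply DifferentiableOn.smul hcoeff_diff.differentiableOn
      apply DifferentiableOn.sub
      · exact (hAnal.comp hsub_diff.differentiableOn hshift_maps_open)
      · exact hAnal.mono hSopen.ge
    · apply ContinuousOn.mono _ hclosure
      apply ContinuousOn.smul hcoeff_diff.continuous.continuousOn
      apply ContinuousOn.sub
      · exact hCont.comp hsub_diff.continuous.continuousOn hshift_maps_closed
      · exact hCont.mono hSclosed.ge
  -- boundedness
  have hB : BddAbove ((norm ∘ g) '' (Complex.HadamardThreeLines.verticalClosedStrip 0 1)) := by
    refine ⟨(n : ℝ) * Real.exp (1 / n) * (C + C), ?_⟩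
    rintro x ⟨w, hw, rfl⟩
    simp only [Function.comp_apply, hgdef]
    rw [norm_smul, abs_coeff]
    have hw' : w ∈ {z : ℂ | 0 ≤ z.re ∧ z.re ≤ 1} := by rw [hSclosed]; exact hw
    have h1 : ‖f (w - Complex.I / n) - f w‖ ≤ C + C :=
      (norm_sub_le _ _).trans (add_le_add (hC _ (hshift_maps_closed hw)) (hC _ hw'))
    have h2 : Real.exp ((w.re ^ 2 - w.im ^ 2) / n) ≤ Real.exp (1 / n) := by
      apply Real.exp_le_exp.mpr
      gcongr
      nlinarith [sq_nonneg w.im, hw'.1, hw'.2]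
    exact mul_le_mul (mul_le_mul_of_nonneg_left h2 hnR.le) h1 (norm_nonneg _) (by positivity)
  -- boundary bounds
  have ha : ∀ w ∈ Complex.re ⁻¹' {(0:ℝ)}, ‖g w‖ ≤ M₀ := by
    intro w hw
    have hw0 : w.re = 0 := hw
    have hwI : w = (w.im : ℂ) * Complex.I := by
      apply Complex.ext <;> simp [hw0]
    have hwI' : w - Complex.I / n = ((w.im - 1/n : ℝ) : ℂ) * Complex.I := by
      apply Complex.ext <;> simp [hw0, Complex.div_re, Complex.div_im]
    simp only [hgdef, norm_smul, abs_coeff]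
    have h1 : ‖f (w - Complex.I / n) - f w‖ ≤ M₀ * (1/n) := by
      rw [hwI']
      nth_rw 2 [hwI]
      have := hL₀ w.im (w.im - 1/n)
      refine this.trans (le_of_eq ?_)
      rw [show w.im - 1/n - w.im = -(1/n) by ring, abs_neg, abs_of_pos (by positivity)]
    have h2 : Real.exp ((w.re ^ 2 - w.im ^ 2) / n) ≤ 1 := by
      apply Real.exp_le_one_iff.mpr
      apply div_nonpos_of_nonpos_of_nonneg _ hnR.le
      rw [hw0]; nlinarith [sq_nonneg w.im]
    have hstep : (n : ℝ) * Real.exp ((w.re ^ 2 - w.im ^ 2) / n) * ‖f (w - Complex.I / n) - f w‖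
        ≤ (n : ℝ) * 1 * (M₀ * (1/n)) :=
      mul_le_mul (mul_le_mul_of_nonneg_left h2 hnR.le) h1 (norm_nonneg _) (by positivity)
    refine hstep.trans (le_of_eq ?_)
    field_simp
  have hb : ∀ w ∈ Complex.re ⁻¹' {(1:ℝ)}, ‖g w‖ ≤ Real.exp (1/n) * M₁ := by
    intro w hw
    have hw1 : w.re = 1 := hw
    have hwI : w = 1 + (w.im : ℂ) * Complex.I := by
      apply Complex.ext <;> simp [hw1]
    have hwI' : w - Complex.I / n = 1 + ((w.im - 1/n : ℝ) : ℂ) * Complex.I := by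
      apply Complex.ext <;> simp [hw1, Complex.div_re, Complex.div_im]
    simp only [hgdef, norm_smul, abs_coeff]
    have h1 : ‖f (w - Complex.I / n) - f w‖ ≤ M₁ * (1/n) := by
      rw [hwI']
      nth_rw 2 [hwI]
      refine (hL₁ w.im (w.im - 1/n)).trans (le_of_eq ?_)
      rw [show w.im - 1/n - w.im = -(1/n) by ring, abs_neg, abs_of_pos (by positivity)]
    have h2 : Real.exp ((w.re ^ 2 - w.im ^ 2) / n) ≤ Real.exp (1/n) := by
      apply Real.exp_le_exp.mpr
      gcongr
      rw [hw1]; nlinarith [sq_nonneg w.im]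
    have hstep : (n : ℝ) * Real.exp ((w.re ^ 2 - w.im ^ 2) / n) * ‖f (w - Complex.I / n) - f w‖
        ≤ (n : ℝ) * Real.exp (1/n) * (M₁ * (1/n)) :=
      mul_le_mul (mul_le_mul_of_nonneg_left h2 hnR.le) h1 (norm_nonneg _) (by positivity)
    refine hstep.trans (le_of_eq ?_)
    field_simp
  have hzS : z ∈ Complex.HadamardThreeLines.verticalClosedStrip 0 1 := by
    rw [← hSclosed]; exact hz
  have key := Complex.HadamardThreeLines.norm_le_interp_of_mem_verticalClosedStrip'
    zero_lt_one hzS hd hB ha hb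
  simp only [sub_zero, div_one] at key
  refine key.trans ?_
  rw [Real.mul_rpow (Real.exp_nonneg _) hM₁.le]
  have hexp : Real.exp (1/n) ^ z.re = Real.exp (1/n * z.re) := by
    rw [Real.rpow_def_of_pos (Real.exp_pos _), Real.log_exp]
  rw [hexp]
  have hle : Real.exp (1/n * z.re) ≤ Real.exp (1/(n:ℝ)) := by
    apply Real.exp_le_exp.mpr
    exact mul_le_of_le_one_right (by positivity) hz.2
  have hfinal : Real.exp (1/n * z.re) * M₀ ^ (1 - z.re) * M₁ ^ z.re
      ≤ Real.exp (1/(n:ℝ)) * M₀ ^ (1 - z.re) * M₁ ^ z.re :=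
    mul_le_mul_of_nonneg_right (mul_le_mul_of_nonneg_right hle (by positivity)) (by positivity)
  refine le_trans (le_of_eq (by ring)) hfinal
end

section
/- If f : ℂ → E is admissible and has boundary Lipschitz constants (M_0, M_1), then for every θ ∈ S° the derivative satisfies ‖f′(θ)‖_E ≤ max(M_0, M_1). -/
open Complex

lemma strip_key
    {E : Type*} [NormedAddCommGroup E] [NormedSpace ℂ E]
    (f : ℂ → E)
    (hBdd : ∃ C : ℝ, ∀ z ∈ {z : ℂ | 0 ≤ z.re ∧ z.re ≤ 1}, ‖f z‖ ≤ C)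
    (hCont : ContinuousOn f {z : ℂ | 0 ≤ z.re ∧ z.re ≤ 1})
    (hAnal : DifferentiableOn ℂ f {z : ℂ | 0 < z.re ∧ z.re < 1})
    (M₀ M₁ : ℝ)
    (hL₀ : ∀ s t : ℝ, ‖f (t * Complex.I) - f (s * Complex.I)‖ ≤ M₀ * |t - s|)
    (hL₁ : ∀ s t : ℝ,
      ‖f (1 + t * Complex.I) - f (1 + s * Complex.I)‖ ≤ M₁ * |t - s|)
    (θ : ℂ) (hθ : 0 < θ.re ∧ θ.re < 1) (h : ℝ) :
    ‖f (θ + h * Complex.I) - f θ‖ ≤ max M₀ M₁ * |h| := by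
  obtain ⟨C, hC⟩ := hBdd
  set g : ℂ → E := fun z => f (z + h * Complex.I) - f z with hg
  have hsub : (Complex.re ⁻¹' Set.Ioo 0 1 : Set ℂ) ⊆ {z : ℂ | 0 ≤ z.re ∧ z.re ≤ 1} :=
    fun z hz => ⟨hz.1.le, hz.2.le⟩
  have hcl : closure (Complex.re ⁻¹' Set.Ioo 0 1 : Set ℂ) ⊆ {z : ℂ | 0 ≤ z.re ∧ z.re ≤ 1} := by
    refine (closure_minimal ?_ ?_)
    · exact hsub
    · exact (isClosed_le continuous_const Complex.continuous_re).inter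
        (isClosed_le Complex.continuous_re continuous_const)
  have hmaps : ∀ z : ℂ, (z + (h : ℂ) * Complex.I).re = z.re := by
    intro z; simp
  have hgd : DiffContOnCl ℂ g (Complex.re ⁻¹' Set.Ioo 0 1) := by
    constructor
    · refine DifferentiableOn.sub ?_ ?_
      · refine (hAnal.comp (by fun_prop) ?_)
        intro z hz
        refine ⟨?_, ?_⟩ <;> simp [hmaps z, (hz : z.re ∈ Set.Ioo 0 1).1, (hz : z.re ∈ Set.Ioo 0 1).2]
      · exact hAnal.mono (fun z hz => ⟨(hz : z.re ∈ Set.Ioo 0 1).1, (hz : z.re ∈ Set.Ioo 0 1).2⟩)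
    · refine ContinuousOn.sub ?_ ?_
      · refine (hCont.comp (by fun_prop) ?_).mono hcl
        intro z hz
        exact ⟨by simp [hmaps z, (hz : 0 ≤ z.re ∧ z.re ≤ 1).1], by simp [hmaps z, (hz : 0 ≤ z.re ∧ z.re ≤ 1).2]⟩
      · exact hCont.mono hcl
  have hgB : ∃ c < Real.pi / (1 - 0), ∃ B,
      g =O[Filter.comap (|Complex.im ·|) Filter.atTop ⊓ Filter.principal (Complex.re ⁻¹' Set.Ioo 0 1)]
        fun z => Real.exp (B * Real.exp (c * |z.im|)) := by
    refine ⟨0, by positivity, 0, ?_⟩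
    simp only [zero_mul, Real.exp_zero]
    refine Asymptotics.IsBigO.of_bound (2 * C) ?_
    refine Filter.eventually_inf_principal.2 (Filter.Eventually.of_forall ?_)
    intro z hz
    have h1 : ‖f (z + h * Complex.I)‖ ≤ C := by
      refine hC _ ?_
      simp only [Set.mem_setOf_eq, hmaps z]
      exact ⟨(hz : z.re ∈ Set.Ioo 0 1).1.le, (hz : z.re ∈ Set.Ioo 0 1).2.le⟩
    have h2 : ‖f z‖ ≤ C := hC _ (hsub hz)
    calc ‖g z‖ ≤ ‖f (z + h * Complex.I)‖ + ‖f z‖ := norm_sub_le _ _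
    _ ≤ 2 * C * ‖(1 : ℝ)‖ := by simp; linarith
  have key : ‖g θ‖ ≤ max M₀ M₁ * |h| := by
    refine PhragmenLindelof.vertical_strip hgd hgB ?_ ?_ hθ.1.le hθ.2.le
    · intro z hz
      set t := z.im with ht
      have hzeq : z = (t : ℂ) * Complex.I := by
        apply Complex.ext <;> simp [hz, ht]
      have : g z = f ((t + h : ℝ) * Complex.I) - f ((t : ℝ) * Complex.I) := by
        rw [hg]; simp only; rw [hzeq]
        congr 2
        push_cast; ring
      rw [this]
      calc ‖f ((t + h : ℝ) * Complex.I) - f ((t : ℝ) * Complex.I)‖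
          ≤ M₀ * |t + h - t| := hL₀ _ _
        _ = M₀ * |h| := by ring_nf
        _ ≤ max M₀ M₁ * |h| := by
            exact mul_le_mul_of_nonneg_right (le_max_left _ _) (abs_nonneg _)
    · intro z hz
      set t := z.im with ht
      have hzeq : z = 1 + (t : ℂ) * Complex.I := by
        apply Complex.ext <;> simp [hz, ht]
      have : g z = f (1 + (t + h : ℝ) * Complex.I) - f (1 + (t : ℝ) * Complex.I) := by
        rw [hg]; simp only; rw [hzeq]
        congr 2
        push_cast; ring
      rw [this]
      calc ‖f (1 + (t + h : ℝ) * Complex.I) - f (1 + (t : ℝ) * Complex.I)‖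
          ≤ M₁ * |t + h - t| := hL₁ _ _
        _ = M₁ * |h| := by ring_nf
        _ ≤ max M₀ M₁ * |h| := by
            exact mul_le_mul_of_nonneg_right (le_max_right _ _) (abs_nonneg _)
  simpa [hg] using key

/-- If `f : ℂ → E` is admissible and has boundary Lipschitz constants
`(M₀, M₁)`, then for every `θ` in the open strip `S°` the derivative satisfies
`‖f′(θ)‖ ≤ max(M₀, M₁)`. -/
theorem deriv_max_bound
    {E : Type*} [NormedAddCommGroup E] [NormedSpace ℂ E] [CompleteSpace E]
    (f : ℂ → E)
    (hBdd : ∃ C : ℝ, ∀ z ∈ {z : ℂ | 0 ≤ z.re ∧ z.re ≤ 1}, ‖f z‖ ≤ C)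
    (hCont : ContinuousOn f {z : ℂ | 0 ≤ z.re ∧ z.re ≤ 1})
    (hAnal : DifferentiableOn ℂ f {z : ℂ | 0 < z.re ∧ z.re < 1})
    (M₀ M₁ : ℝ) (hM₀ : 0 ≤ M₀) (hM₁ : 0 ≤ M₁)
    (hL₀ : ∀ s t : ℝ, ‖f (t * Complex.I) - f (s * Complex.I)‖ ≤ M₀ * |t - s|)
    (hL₁ : ∀ s t : ℝ,
      ‖f (1 + t * Complex.I) - f (1 + s * Complex.I)‖ ≤ M₁ * |t - s|)
    (θ : ℂ) (hθ : 0 < θ.re ∧ θ.re < 1) :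
    ‖deriv f θ‖ ≤ max M₀ M₁ := by
  have hopen : IsOpen {z : ℂ | 0 < z.re ∧ z.re < 1} :=
    (isOpen_lt continuous_const Complex.continuous_re).inter
      (isOpen_lt Complex.continuous_re continuous_const)
  have hdiff : HasDerivAt f (deriv f θ) θ :=
    (hAnal.differentiableAt (hopen.mem_nhds hθ)).hasDerivAt
  -- derivative of t ↦ f (θ + t * I) at 0 is I • deriv f θ
  have hline : HasDerivAt (fun t : ℝ => θ + (t : ℂ) * Complex.I) Complex.I 0 := by
    simpa using ((hasDerivAt_id (0:ℝ)).ofReal_comp.mul_const Complex.I).const_add θ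
  have h0 : θ + (((0:ℝ) : ℂ)) * Complex.I = θ := by simp
  have hdiff' : HasDerivAt f (deriv f θ) (θ + (((0:ℝ) : ℂ)) * Complex.I) := by
    rw [h0]; exact hdiff
  have hcomp : HasDerivAt (fun t : ℝ => f (θ + (t : ℂ) * Complex.I))
      (Complex.I • deriv f θ) 0 := by
    have := HasDerivAt.scomp (0 : ℝ) hdiff' hline
    exact this
  have hnorm : ‖Complex.I • deriv f θ‖ = ‖deriv f θ‖ := by
    rw [norm_smul]; simp
  rw [← hnorm]
  have hslope := hasDerivAt_iff_tendsto_slope.mp hcomp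
  refine le_of_tendsto hslope.norm ?_
  filter_upwards [self_mem_nhdsWithin] with t ht
  have ht0 : t ≠ 0 := ht
  have key := strip_key f hBdd hCont hAnal M₀ M₁ hL₀ hL₁ θ hθ t
  have : slope (fun t : ℝ => f (θ + (t : ℂ) * Complex.I)) 0 t
      = (t : ℝ)⁻¹ • (f (θ + (t : ℂ) * Complex.I) - f θ) := by
    rw [slope_def_module]
    simp
  rw [this, norm_smul]
  have habs : ‖(t : ℝ)⁻¹‖ = |t|⁻¹ := by rw [Real.norm_eq_abs, abs_inv]
  rw [habs]
  rw [inv_mul_le_iff₀ (by positivity : (0:ℝ) < |t|)]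
  calc ‖f (θ + (t : ℂ) * Complex.I) - f θ‖ ≤ max M₀ M₁ * |t| := key
    _ ≤ |t| * max M₀ M₁ := le_of_eq (mul_comm _ _)
end

section
/- If f : ℂ → E is admissible and has boundary Lipschitz constants (M_0, M_1) with M_0 > 0 and M_1 > 0, then for every θ ∈ S° the derivative satisfies ‖f′(θ)‖_E ≤ M_0^{1 − Re θ} M_1^{Re θ}. -/
open Complex

private lemma deriv_interpolated_bound_key
    {E : Type*} [NormedAddCommGroup E] [NormedSpace ℂ E] [CompleteSpace E]
    (f : ℂ → E)
    (hBdd : ∃ C : ℝ, ∀ z ∈ {z : ℂ | 0 ≤ z.re ∧ z.re ≤ 1}, ‖f z‖ ≤ C)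
    (hCont : ContinuousOn f {z : ℂ | 0 ≤ z.re ∧ z.re ≤ 1})
    (hAnal : DifferentiableOn ℂ f {z : ℂ | 0 < z.re ∧ z.re < 1})
    (M₀ M₁ : ℝ) (hM₀ : 0 < M₀) (hM₁ : 0 < M₁)
    (hL₀ : ∀ s t : ℝ, ‖f (t * Complex.I) - f (s * Complex.I)‖ ≤ M₀ * |t - s|)
    (hL₁ : ∀ s t : ℝ,
      ‖f (1 + t * Complex.I) - f (1 + s * Complex.I)‖ ≤ M₁ * |t - s|)
    (θ : ℂ) (hθ : 0 < θ.re ∧ θ.re < 1) (h : ℝ) :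
    ‖f (θ + h * I) - f θ‖ ≤ (M₀ ^ (1 - θ.re) * M₁ ^ θ.re) * |h| := by
  open Complex.HadamardThreeLines Set in
  rcases eq_or_ne h 0 with rfl | hne
  · simp
  have hstrip : verticalClosedStrip 0 1 = {z : ℂ | 0 ≤ z.re ∧ z.re ≤ 1} := rfl
  set g : ℂ → E := fun z => f (z + h * I) - f z with hg
  have hmap : ∀ z : ℂ, (z + h * I).re = z.re := by intro z; simp
  have hsub : closure (verticalStrip 0 1) ⊆ verticalClosedStrip 0 1 := by
    apply closure_minimal
    · intro z hz; exact ⟨le_of_lt hz.1, le_of_lt hz.2⟩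
    · exact (isClosed_Icc.preimage continuous_re)
  have hcont' : ContinuousOn g (verticalClosedStrip 0 1) := by
    apply ContinuousOn.sub
    · apply hCont.comp (by fun_prop)
      intro z hz; rw [hstrip] at hz
      exact ⟨by simpa [hmap z] using hz.1, by simpa [hmap z] using hz.2⟩
    · exact hCont
  have hdiff : DiffContOnCl ℂ g (verticalStrip 0 1) := by
    constructor
    · apply DifferentiableOn.sub
      · apply (hAnal.comp (by fun_prop) ?_)
        intro z hz; exact ⟨by simpa [hmap z] using hz.1, by simpa [hmap z] using hz.2⟩
      · exact hAnal
    · exact hcont'.mono hsub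
  obtain ⟨C, hC⟩ := hBdd
  have hB : BddAbove ((norm ∘ g) '' (verticalClosedStrip 0 1)) := by
    refine ⟨2 * C, ?_⟩
    rintro y ⟨z, hz, rfl⟩
    rw [hstrip] at hz
    have h1 := hC (z + h * I) ⟨by simpa [hmap z] using hz.1, by simpa [hmap z] using hz.2⟩
    have h2 := hC z hz
    calc ‖g z‖ ≤ ‖f (z + h * I)‖ + ‖f z‖ := norm_sub_le _ _
    _ ≤ 2 * C := by linarith
  have ha : ∀ z ∈ re ⁻¹' {(0:ℝ)}, ‖g z‖ ≤ M₀ * |h| := by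
    intro z hz
    have hre : z.re = 0 := hz
    have hz0 : z = (z.im : ℂ) * I := by
      apply Complex.ext <;> simp [hre]
    have he : z + h * I = ((z.im + h : ℝ) : ℂ) * I := by
      apply Complex.ext <;> simp [hre]
    have := hL₀ z.im (z.im + h)
    simpa [hg, ← hz0, he] using this
  have hb : ∀ z ∈ re ⁻¹' {(1:ℝ)}, ‖g z‖ ≤ M₁ * |h| := by
    intro z hz
    have hre : z.re = 1 := hz
    have hz0 : z = 1 + (z.im : ℂ) * I := by
      apply Complex.ext <;> simp [hre]
    have he : z + h * I = 1 + ((z.im + h : ℝ) : ℂ) * I := by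
      apply Complex.ext <;> simp [hre]
    have := hL₁ z.im (z.im + h)
    simpa [hg, ← hz0, he] using this
  have hθc : θ ∈ verticalClosedStrip 0 1 := ⟨le_of_lt hθ.1, le_of_lt hθ.2⟩
  have key := norm_le_interp_of_mem_verticalClosedStrip' (f := g) zero_lt_one hθc hdiff hB ha hb
  have hhpos : (0:ℝ) < |h| := abs_pos.mpr hne
  calc ‖f (θ + h * I) - f θ‖ = ‖g θ‖ := rfl
  _ ≤ (M₀ * |h|) ^ (1 - θ.re) * (M₁ * |h|) ^ θ.re := by simpa using key
  _ = (M₀ ^ (1 - θ.re) * M₁ ^ θ.re) * |h| := by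
      rw [Real.mul_rpow hM₀.le hhpos.le, Real.mul_rpow hM₁.le hhpos.le,
        show M₀ ^ (1 - θ.re) * |h| ^ (1 - θ.re) * (M₁ ^ θ.re * |h| ^ θ.re)
          = (M₀ ^ (1 - θ.re) * M₁ ^ θ.re) * (|h| ^ (1 - θ.re) * |h| ^ θ.re) by ring,
        ← Real.rpow_add hhpos]
      norm_num

/-- If `f : ℂ → E` is admissible and has boundary Lipschitz constants
`(M₀, M₁)` with `M₀ > 0` and `M₁ > 0`, then for every `θ` in the open strip `S°`
the derivative satisfies `‖f′(θ)‖ ≤ M₀^{1 − Re θ} M₁^{Re θ}`. -/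
theorem deriv_interpolated_bound
    {E : Type*} [NormedAddCommGroup E] [NormedSpace ℂ E] [CompleteSpace E]
    (f : ℂ → E)
    (hBdd : ∃ C : ℝ, ∀ z ∈ {z : ℂ | 0 ≤ z.re ∧ z.re ≤ 1}, ‖f z‖ ≤ C)
    (hCont : ContinuousOn f {z : ℂ | 0 ≤ z.re ∧ z.re ≤ 1})
    (hAnal : DifferentiableOn ℂ f {z : ℂ | 0 < z.re ∧ z.re < 1})
    (M₀ M₁ : ℝ) (hM₀ : 0 < M₀) (hM₁ : 0 < M₁)
    (hL₀ : ∀ s t : ℝ, ‖f (t * Complex.I) - f (s * Complex.I)‖ ≤ M₀ * |t - s|)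
    (hL₁ : ∀ s t : ℝ,
      ‖f (1 + t * Complex.I) - f (1 + s * Complex.I)‖ ≤ M₁ * |t - s|)
    (θ : ℂ) (hθ : 0 < θ.re ∧ θ.re < 1) :
    ‖deriv f θ‖ ≤ M₀ ^ (1 - θ.re) * M₁ ^ θ.re := by
  have key : ∀ h : ℝ,
      ‖f (θ + h * I) - f θ‖ ≤ (M₀ ^ (1 - θ.re) * M₁ ^ θ.re) * |h| :=
    deriv_interpolated_bound_key f hBdd hCont hAnal M₀ M₁ hM₀ hM₁ hL₀ hL₁ θ hθ
  set K := M₀ ^ (1 - θ.re) * M₁ ^ θ.re with hK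
  have hopen : IsOpen {z : ℂ | 0 < z.re ∧ z.re < 1} :=
    (isOpen_Ioo : IsOpen (Set.Ioo (0:ℝ) 1)).preimage continuous_re
  have hdf : DifferentiableAt ℂ f θ :=
    hAnal.differentiableAt (hopen.mem_nhds hθ)
  have hc : HasDerivAt (fun h : ℝ => θ + (h : ℂ) * I) I 0 := by
    have h1 : HasDerivAt (fun h : ℝ => (h : ℂ)) 1 0 := by
      exact Complex.ofRealCLM.hasDerivAt (x := (0:ℝ))
    simpa using (h1.mul_const I).const_add θ
  have hg : HasDerivAt (fun h : ℝ => f (θ + (h : ℂ) * I)) (I • deriv f θ) 0 := by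
    have h0 : θ + ((0:ℝ):ℂ) * I = θ := by simp
    have hout : HasDerivAt f (deriv f θ) ((fun h : ℝ => θ + (h : ℂ) * I) 0) := by
      simpa [h0] using hdf.hasDerivAt
    have := HasDerivAt.scomp (x := (0:ℝ)) hout hc
    exact this
  rw [hasDerivAt_iff_tendsto_slope] at hg
  have hnorm : Filter.Tendsto (fun h : ℝ => ‖slope (fun h : ℝ => f (θ + (h : ℂ) * I)) 0 h‖)
      (nhdsWithin 0 {(0:ℝ)}ᶜ) (nhds ‖I • deriv f θ‖) :=
    (continuous_norm.tendsto _).comp hg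
  have hle : ‖I • deriv f θ‖ ≤ K := by
    refine le_of_tendsto hnorm ?_
    filter_upwards [self_mem_nhdsWithin] with h hh
    have hne : h ≠ 0 := hh
    have : slope (fun h : ℝ => f (θ + (h : ℂ) * I)) 0 h
        = (h : ℝ)⁻¹ • (f (θ + h * I) - f θ) := by
      simp [slope_def_field, slope, hne]
    rw [this, norm_smul]
    have habs : (0:ℝ) < |h| := abs_pos.mpr hne
    calc ‖(h:ℝ)⁻¹‖ * ‖f (θ + h * I) - f θ‖ ≤ |h|⁻¹ * (K * |h|) := by
          rw [Real.norm_eq_abs, abs_inv]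
          exact mul_le_mul_of_nonneg_left (key h) (by positivity)
    _ = K := by field_simp
  calc ‖deriv f θ‖ = ‖I • deriv f θ‖ := by rw [norm_smul, Complex.norm_I, one_mul]
  _ ≤ K := hle
end
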